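/- Let (E, σ, τ, ε) be any signed chord diagram, let m be a state, and let m' be the state obtained from m by changing the marker on a single chord {x, τ x}. Then the numbers of components of the two smoothings differ by at most one: ||m'| − |m|| ≤ 1. (A Morse modification of a closed 1-manifold changes the number of connected components by one if it preserves orientation and preserves the number of components otherwise; in particular, unlike the classical case, for a general — e.g. virtual — diagram the number of components of a smoothing may be unchanged by a marker change.) -/

import Mathlib

open LaurentPolynomial

/-- The involution `α` on `E × Bool` matching the two ends of each base arc:
`α (x, false) = (σ x, true)` and `α (x, true) = (σ⁻¹ x, false)`. -/
def alphaPerm {E : Type*} (σ : Equiv.Perm E) : Equiv.Perm (E × Bool) :=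
  Function.Involutive.toPerm
    (fun p => if p.2 then (σ⁻¹ p.1, false) else (σ p.1, true))
    (by rintro ⟨x, _ | _⟩ <;> simp)

/-- The involution `μ_m` on `E × Bool` defined by a state `m` of a signed chord
diagram: it sends `(x, true) ↦ (τ x, false)` and `(x, false) ↦ (τ x, true)` when
`m x = ε x`, and `(x, true) ↦ (τ x, true)`, `(x, false) ↦ (τ x, false)` otherwise. -/
def muPerm {E : Type*} (τ : Equiv.Perm E) (ε m : E → Bool)
    (hτ : ∀ x, τ (τ x) = x) (hε : ∀ x, ε (τ x) = ε x) (hm : ∀ x, m (τ x) = m x) :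
    Equiv.Perm (E × Bool) :=
  Function.Involutive.toPerm
    (fun p => (τ p.1, if m p.1 = ε p.1 then !p.2 else p.2))
    (by rintro ⟨x, b⟩; by_cases h : m x = ε x <;> simp [h, hτ, hε, hm])

/-- `|m|`: the number of orbits on `E × Bool` of the subgroup of `Equiv.Perm (E × Bool)`
generated by `α` and `μ_m`, i.e. the number of components of the smoothing of the
signed chord diagram along the state `m`. -/
noncomputable def numComponents {E : Type*} [Fintype E] [DecidableEq E]
    (σ τ : Equiv.Perm E) (ε m : E → Bool)
    (hτ : ∀ x, τ (τ x) = x) (hε : ∀ x, ε (τ x) = ε x) (hm : ∀ x, m (τ x) = m x) : ℕ :=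
  Nat.card (MulAction.orbitRel.Quotient
    (Subgroup.closure {alphaPerm σ, muPerm τ ε m hτ hε hm} : Subgroup (Equiv.Perm (E × Bool)))
    (E × Bool))

private lemma mem_orbit_of_le' {X : Type*} {H G : Subgroup (Equiv.Perm X)} (hHG : H ≤ G)
    {u v : X} (h : u ∈ MulAction.orbit H v) : u ∈ MulAction.orbit G v := by
  obtain ⟨⟨g, hg⟩, rfl⟩ := h
  exact ⟨⟨g, hHG hg⟩, rfl⟩

private lemma orbit_symm' {X : Type*} {H : Subgroup (Equiv.Perm X)} {u v : X}
    (h : u ∈ MulAction.orbit H v) : v ∈ MulAction.orbit H u := by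
  rw [MulAction.orbit_eq_iff.mpr h]
  exact MulAction.mem_orbit_self _

private lemma orbit_trans' {X : Type*} {H : Subgroup (Equiv.Perm X)} {u v w : X}
    (h1 : u ∈ MulAction.orbit H v) (h2 : v ∈ MulAction.orbit H w) :
    u ∈ MulAction.orbit H w := by
  rw [← MulAction.orbit_eq_iff.mpr h2]
  exact h1

private lemma card_orbit_quot_le' {X : Type*} [Finite X] {H G : Subgroup (Equiv.Perm X)}
    (hHG : H ≤ G) :
    Nat.card (MulAction.orbitRel.Quotient G X) ≤ Nat.card (MulAction.orbitRel.Quotient H X) := by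
  apply Nat.card_le_card_of_surjective
    (Quotient.map' (fun u => u) (fun u v h =>
      MulAction.orbitRel_apply.mpr (mem_orbit_of_le' hHG (MulAction.orbitRel_apply.mp h))))
  intro q
  induction q using Quotient.inductionOn' with
  | h u => exact ⟨Quotient.mk'' u, rfl⟩

private lemma card_orbit_quot_le_succ' {X : Type*} [Finite X] {H G : Subgroup (Equiv.Perm X)}
    (hHG : H ≤ G) (a b : X)
    (key : ∀ u v : X, u ∈ MulAction.orbit G v →
      u ∈ MulAction.orbit H v ∨ (u ∈ MulAction.orbit H a ∧ v ∈ MulAction.orbit H b) ∨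
        (u ∈ MulAction.orbit H b ∧ v ∈ MulAction.orbit H a)) :
    Nat.card (MulAction.orbitRel.Quotient H X) ≤
      Nat.card (MulAction.orbitRel.Quotient G X) + 1 := by
  classical
  set π : MulAction.orbitRel.Quotient H X → MulAction.orbitRel.Quotient G X :=
    Quotient.map' (fun u => u) (fun u v h =>
      MulAction.orbitRel_apply.mpr (mem_orbit_of_le' hHG (MulAction.orbitRel_apply.mp h)))
    with hπ
  set f : MulAction.orbitRel.Quotient H X → Option (MulAction.orbitRel.Quotient G X) :=
    fun q => if q = Quotient.mk'' b then none else some (π q) with hf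
  have hinj : Function.Injective f := by
    intro q1 q2 hq
    induction q1 using Quotient.inductionOn' with
    | h u =>
    induction q2 using Quotient.inductionOn' with
    | h v =>
    by_cases h1 : (Quotient.mk'' u : MulAction.orbitRel.Quotient H X) = Quotient.mk'' b <;>
      by_cases h2 : (Quotient.mk'' v : MulAction.orbitRel.Quotient H X) = Quotient.mk'' b
    · rw [h1, h2]
    · simp only [hf, if_pos h1, if_neg h2] at hq; exact absurd hq (by simp)
    · simp only [hf, if_neg h1, if_pos h2] at hq; exact absurd hq (by simp)
    · simp only [hf, if_neg h1, if_neg h2, Option.some.injEq] at hq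
      have hG : u ∈ MulAction.orbit G v := by
        have : (Quotient.mk'' u : MulAction.orbitRel.Quotient G X) = Quotient.mk'' v := hq
        exact MulAction.orbitRel_apply.mp (Quotient.eq''.mp this)
      rcases key u v hG with h | ⟨hu, hv⟩ | ⟨hu, hv⟩
      · exact Quotient.sound' (MulAction.orbitRel_apply.mpr h)
      · exact absurd (Quotient.sound' (MulAction.orbitRel_apply.mpr hv)) h2
      · exact absurd (Quotient.sound' (MulAction.orbitRel_apply.mpr hu)) h1
  haveI := Fintype.ofFinite (MulAction.orbitRel.Quotient G X)
  calc Nat.card (MulAction.orbitRel.Quotient H X)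
      ≤ Nat.card (Option (MulAction.orbitRel.Quotient G X)) :=
        Nat.card_le_card_of_injective f hinj
    _ = Nat.card (MulAction.orbitRel.Quotient G X) + 1 := Finite.card_option

private lemma key_lemma' {X : Type*} {H : Subgroup (Equiv.Perm X)} {α μ μ' : Equiv.Perm X}
    (hα : α ∈ H) (hμ : μ ∈ H) {a b : X}
    (step : ∀ u : X, μ' u ∈ MulAction.orbit H u ∨
        (μ' u ∈ MulAction.orbit H a ∧ u ∈ MulAction.orbit H b) ∨
        (μ' u ∈ MulAction.orbit H b ∧ u ∈ MulAction.orbit H a)) :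
    ∀ u v : X, u ∈ MulAction.orbit (Subgroup.closure {α, μ, μ'}) v →
      u ∈ MulAction.orbit H v ∨ (u ∈ MulAction.orbit H a ∧ v ∈ MulAction.orbit H b) ∨
        (u ∈ MulAction.orbit H b ∧ v ∈ MulAction.orbit H a) := by
  set RR : X → X → Prop := fun u v =>
    u ∈ MulAction.orbit H v ∨ (u ∈ MulAction.orbit H a ∧ v ∈ MulAction.orbit H b) ∨
      (u ∈ MulAction.orbit H b ∧ v ∈ MulAction.orbit H a) with hRR
  have rrefl : ∀ u, RR u u := fun u => Or.inl (MulAction.mem_orbit_self u)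
  have rsymm : ∀ {u v}, RR u v → RR v u := by
    rintro u v (h | ⟨h1, h2⟩ | ⟨h1, h2⟩)
    · exact Or.inl (orbit_symm' h)
    · exact Or.inr (Or.inr ⟨h2, h1⟩)
    · exact Or.inr (Or.inl ⟨h2, h1⟩)
  have rtrans : ∀ {u v w}, RR u v → RR v w → RR u w := by
    rintro u v w (h | ⟨h1, h2⟩ | ⟨h1, h2⟩) (h' | ⟨h1', h2'⟩ | ⟨h1', h2'⟩)
    · exact Or.inl (orbit_trans' h h')
    · exact Or.inr (Or.inl ⟨orbit_trans' h h1', h2'⟩)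
    · exact Or.inr (Or.inr ⟨orbit_trans' h h1', h2'⟩)
    · exact Or.inr (Or.inl ⟨h1, orbit_trans' (orbit_symm' h') h2⟩)
    · exact Or.inl (orbit_trans' h1 (orbit_trans' (orbit_trans' (orbit_symm' h1') h2)
        (orbit_symm' h2')))
    · exact Or.inl (orbit_trans' h1 (orbit_symm' h2'))
    · exact Or.inr (Or.inr ⟨h1, orbit_trans' (orbit_symm' h') h2⟩)
    · exact Or.inl (orbit_trans' h1 (orbit_symm' h2'))
    · exact Or.inl (orbit_trans' h1 (orbit_trans' (orbit_trans' (orbit_symm' h1') h2)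
        (orbit_symm' h2')))
  have P : ∀ g ∈ Subgroup.closure {α, μ, μ'}, ∀ u : X, RR (g u) u := by
    intro g hg
    induction hg using Subgroup.closure_induction with
    | mem s hs =>
      intro u
      rcases hs with rfl | rfl | rfl
      · exact Or.inl ⟨⟨s, hα⟩, rfl⟩
      · exact Or.inl ⟨⟨s, hμ⟩, rfl⟩
      · exact step u
    | one => intro u; simpa using rrefl u
    | mul g h _ _ hg hh =>
      intro u
      have hmul : (g * h) u = g (h u) := rfl
      rw [hmul]
      exact rtrans (hg (h u)) (hh u)
    | inv g _ hg =>
      intro u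
      have h1 : RR (g (g⁻¹ u)) (g⁻¹ u) := hg (g⁻¹ u)
      rw [Equiv.Perm.coe_inv, Equiv.apply_symm_apply] at h1
      exact rsymm h1
  rintro u v ⟨⟨g, hg⟩, rfl⟩
  exact P g hg v

private lemma step_lemma' {E : Type*} [Fintype E] [DecidableEq E]
    (σ τ : Equiv.Perm E) (ε : E → Bool)
    (hτ : ∀ y : E, τ (τ y) = y) (hτfix : ∀ y : E, τ y ≠ y)
    (hε : ∀ y : E, ε (τ y) = ε y)
    (m m' : E → Bool)
    (hm : ∀ y : E, m (τ y) = m y) (hm' : ∀ y : E, m' (τ y) = m' y)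
    (x : E)
    (hx : m' x = !(m x)) (hτx : m' (τ x) = !(m (τ x)))
    (hother : ∀ y : E, y ≠ x → y ≠ τ x → m' y = m y) (u : E × Bool) :
    muPerm τ ε m' hτ hε hm' u ∈ MulAction.orbit
        (Subgroup.closure {alphaPerm σ, muPerm τ ε m hτ hε hm} :
          Subgroup (Equiv.Perm (E × Bool))) u ∨
      (muPerm τ ε m' hτ hε hm' u ∈ MulAction.orbit
          (Subgroup.closure {alphaPerm σ, muPerm τ ε m hτ hε hm} :
            Subgroup (Equiv.Perm (E × Bool))) (x, true) ∧
        u ∈ MulAction.orbit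
          (Subgroup.closure {alphaPerm σ, muPerm τ ε m hτ hε hm} :
            Subgroup (Equiv.Perm (E × Bool))) (x, false)) ∨
      (muPerm τ ε m' hτ hε hm' u ∈ MulAction.orbit
          (Subgroup.closure {alphaPerm σ, muPerm τ ε m hτ hε hm} :
            Subgroup (Equiv.Perm (E × Bool))) (x, false) ∧
        u ∈ MulAction.orbit
          (Subgroup.closure {alphaPerm σ, muPerm τ ε m hτ hε hm} :
            Subgroup (Equiv.Perm (E × Bool))) (x, true)) := by
  set H : Subgroup (Equiv.Perm (E × Bool)) :=
    Subgroup.closure {alphaPerm σ, muPerm τ ε m hτ hε hm} with hH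
  have hμH : muPerm τ ε m hτ hε hm ∈ H := Subgroup.subset_closure (by simp)
  have hμapp : ∀ p : E × Bool,
      muPerm τ ε m hτ hε hm p = (τ p.1, if m p.1 = ε p.1 then !p.2 else p.2) := fun _ => rfl
  have hμ'app : ∀ p : E × Bool,
      muPerm τ ε m' hτ hε hm' p = (τ p.1, if m' p.1 = ε p.1 then !p.2 else p.2) := fun _ => rfl
  obtain ⟨y, s⟩ := u
  by_cases h1 : y = x
  · subst h1
    have hval : muPerm τ ε m' hτ hε hm' (y, s) = muPerm τ ε m hτ hε hm (y, !s) := by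
      rw [hμ'app, hμapp]
      simp only
      rw [hx]
      cases m y <;> cases ε y <;> cases s <;> rfl
    have h2 : muPerm τ ε m' hτ hε hm' (y, s) ∈ MulAction.orbit H (y, !s) := by
      rw [hval]; exact ⟨⟨_, hμH⟩, rfl⟩
    cases s
    · exact Or.inr (Or.inl ⟨h2, MulAction.mem_orbit_self _⟩)
    · exact Or.inr (Or.inr ⟨h2, MulAction.mem_orbit_self _⟩)
  · by_cases h2 : y = τ x
    · subst h2
      have hμval : muPerm τ ε m hτ hε hm (τ x, s) =
          (x, if m (τ x) = ε (τ x) then !s else s) := by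
        rw [hμapp]; simp only; rw [hτ x]
      have hμ'val : muPerm τ ε m' hτ hε hm' (τ x, s) =
          (x, !(if m (τ x) = ε (τ x) then !s else s)) := by
        rw [hμ'app]; simp only; rw [hτ x, hτx]
        cases m (τ x) <;> cases ε (τ x) <;> cases s <;> rfl
      have hrel : (τ x, s) ∈ MulAction.orbit H (x, if m (τ x) = ε (τ x) then !s else s) := by
        apply orbit_symm'
        rw [← hμval]
        exact ⟨⟨_, hμH⟩, rfl⟩
      cases hcv : (if m (τ x) = ε (τ x) then !s else s)
      · refine Or.inr (Or.inl ⟨?_, ?_⟩)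
        · rw [hμ'val, hcv]; exact MulAction.mem_orbit_self _
        · rw [hcv] at hrel; exact hrel
      · refine Or.inr (Or.inr ⟨?_, ?_⟩)
        · rw [hμ'val, hcv]; exact MulAction.mem_orbit_self _
        · rw [hcv] at hrel; exact hrel
    · left
      have hval : muPerm τ ε m' hτ hε hm' (y, s) = muPerm τ ε m hτ hε hm (y, s) := by
        rw [hμ'app, hμapp, hother y h1 h2]
      rw [hval]
      exact ⟨⟨_, hμH⟩, rfl⟩

theorem numComponents_changeMarker_le_one
    {E : Type*} [Fintype E] [DecidableEq E]
    (σ τ : Equiv.Perm E) (ε : E → Bool)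
    (hτ : ∀ y : E, τ (τ y) = y) (hτfix : ∀ y : E, τ y ≠ y)
    (hε : ∀ y : E, ε (τ y) = ε y)
    (m m' : E → Bool)
    (hm : ∀ y : E, m (τ y) = m y) (hm' : ∀ y : E, m' (τ y) = m' y)
    (x : E)
    (hx : m' x = !(m x)) (hτx : m' (τ x) = !(m (τ x)))
    (hother : ∀ y : E, y ≠ x → y ≠ τ x → m' y = m y) :
    |(numComponents σ τ ε m' hτ hε hm' : ℤ) - (numComponents σ τ ε m hτ hε hm : ℤ)| ≤ 1 := by
  classical
  set α := alphaPerm σ with hα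
  set μ := muPerm τ ε m hτ hε hm with hμd
  set μ' := muPerm τ ε m' hτ hε hm' with hμ'd
  set H : Subgroup (Equiv.Perm (E × Bool)) := Subgroup.closure {α, μ} with hH
  set H' : Subgroup (Equiv.Perm (E × Bool)) := Subgroup.closure {α, μ'} with hH'
  set G : Subgroup (Equiv.Perm (E × Bool)) := Subgroup.closure {α, μ, μ'} with hG
  have hHG : H ≤ G := Subgroup.closure_mono (by
    intro g hg
    simp only [Set.mem_insert_iff, Set.mem_singleton_iff] at hg ⊢
    tauto)
  have hH'G : H' ≤ G := Subgroup.closure_mono (by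
    intro g hg
    simp only [Set.mem_insert_iff, Set.mem_singleton_iff] at hg ⊢
    tauto)
  have hαH : α ∈ H := Subgroup.subset_closure (by simp)
  have hμH : μ ∈ H := Subgroup.subset_closure (by simp)
  have hαH' : α ∈ H' := Subgroup.subset_closure (by simp)
  have hμ'H' : μ' ∈ H' := Subgroup.subset_closure (by simp)
  -- reversed hypotheses
  have hx' : m x = !(m' x) := by rw [hx, Bool.not_not]
  have hτx' : m (τ x) = !(m' (τ x)) := by rw [hτx, Bool.not_not]
  have hother' : ∀ y : E, y ≠ x → y ≠ τ x → m y = m' y := fun y hy1 hy2 =>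
    (hother y hy1 hy2).symm
  have step1 := step_lemma' σ τ ε hτ hτfix hε m m' hm hm' x hx hτx hother
  have step2 := step_lemma' σ τ ε hτ hτfix hε m' m hm' hm x hx' hτx' hother'
  have key1 := key_lemma' (a := ((x, true) : E × Bool)) (b := ((x, false) : E × Bool))
    hαH hμH step1
  have key2' := key_lemma' (a := ((x, true) : E × Bool)) (b := ((x, false) : E × Bool))
    hαH' hμ'H' step2
  have hsets : ({α, μ', μ} : Set (Equiv.Perm (E × Bool))) = {α, μ, μ'} := by
    rw [Set.pair_comm μ' μ]
  rw [hsets] at key2'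
  have n1 := card_orbit_quot_le' hHG
  have n2 := card_orbit_quot_le_succ' hHG _ _ key1
  have n3 := card_orbit_quot_le' hH'G
  have n4 := card_orbit_quot_le_succ' hH'G _ _ key2'
  have e1 : numComponents σ τ ε m hτ hε hm =
      Nat.card (MulAction.orbitRel.Quotient H (E × Bool)) := rfl
  have e2 : numComponents σ τ ε m' hτ hε hm' =
      Nat.card (MulAction.orbitRel.Quotient H' (E × Bool)) := rfl
  rw [e1, e2, abs_le]
  omega
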